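/- Let r ≥ 1 and c ∈ [0, 2^{r−1}−1]. Consider V = { Σ_{j=1}^{r−1} 2^{j−1} β_j + (2^{r−1} + c) β_r : β ∈ {−1,1}^r }. Then V = { ±(c+1), ±(c+3), …, ±(c + 2^r − 1) }, i.e., V consists exactly of the integers of the form ±(c + odd) with the odd part ranging over the odd numbers in [1, 2^r − 1]; in particular |V| = 2^r. -/
import Mathlib

lemma aux_sum_pm (n : ℕ) (β : ℕ → ℤ)
    (hβ : ∀ j, 1 ≤ j → j ≤ n → β j = 1 ∨ β j = -1) :
    ∃ m : ℕ, m < 2 ^ n ∧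
      (∑ j ∈ Finset.Icc 1 n, 2 ^ (j - 1) * β j) = 2 * m + 1 - 2 ^ n := by
  induction n with
  | zero => exact ⟨0, by norm_num⟩
  | succ n ih =>
    obtain ⟨m, hm, hsum⟩ := ih (fun j h1 h2 => hβ j h1 (by omega))
    have hins : Finset.Icc 1 (n + 1) = insert (n + 1) (Finset.Icc 1 n) := by
      ext x; simp only [Finset.mem_Icc, Finset.mem_insert]; omega
    have hnot : n + 1 ∉ Finset.Icc 1 n := by simp
    rw [hins, Finset.sum_insert hnot, hsum]
    have h2 : (2:ℕ) ^ (n + 1) = 2 ^ n + 2 ^ n := by rw [pow_succ]; ring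
    rcases hβ (n + 1) (by omega) le_rfl with h | h <;> rw [h]
    · refine ⟨m + 2 ^ n, by omega, ?_⟩
      push_cast [pow_succ]; ring
    · exact ⟨m, by omega, by push_cast [pow_succ]; ring⟩

lemma aux_exists_pm (n : ℕ) : ∀ m : ℕ, m < 2 ^ n →
    ∃ β : ℕ → ℤ, (∀ j, 1 ≤ j → j ≤ n → β j = 1 ∨ β j = -1) ∧
      (∑ j ∈ Finset.Icc 1 n, 2 ^ (j - 1) * β j) = 2 * m + 1 - 2 ^ n := by
  induction n with
  | zero => intro m hm; interval_cases m; exact ⟨fun _ => 1, by simp, by simp⟩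
  | succ n ih =>
    intro m hm
    have hins : Finset.Icc 1 (n + 1) = insert (n + 1) (Finset.Icc 1 n) := by
      ext x; simp only [Finset.mem_Icc, Finset.mem_insert]; omega
    have hnot : n + 1 ∉ Finset.Icc 1 n := by simp
    by_cases hcase : m < 2 ^ n
    · obtain ⟨β, hβ, hsum⟩ := ih m hcase
      refine ⟨fun j => if j = n + 1 then -1 else β j, ?_, ?_⟩
      · intro j h1 h2
        by_cases hj : j = n + 1
        · simp [hj]
        · simpa [hj] using hβ j h1 (by omega)
      · rw [hins, Finset.sum_insert hnot]
        have : ∑ j ∈ Finset.Icc 1 n, (2:ℤ) ^ (j - 1) *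
            (if j = n + 1 then -1 else β j) = ∑ j ∈ Finset.Icc 1 n, 2 ^ (j - 1) * β j := by
          apply Finset.sum_congr rfl
          intro j hj
          simp only [Finset.mem_Icc] at hj
          have : j ≠ n + 1 := by omega
          simp [this]
        rw [this, hsum]
        simp [pow_succ]; ring
    · have hm' : m - 2 ^ n < 2 ^ n := by
        have : (2:ℕ) ^ (n + 1) = 2 ^ n + 2 ^ n := by rw [pow_succ]; ring
        omega
      obtain ⟨β, hβ, hsum⟩ := ih (m - 2 ^ n) hm'
      refine ⟨fun j => if j = n + 1 then 1 else β j, ?_, ?_⟩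
      · intro j h1 h2
        by_cases hj : j = n + 1
        · simp [hj]
        · simpa [hj] using hβ j h1 (by omega)
      · rw [hins, Finset.sum_insert hnot]
        have : ∑ j ∈ Finset.Icc 1 n, (2:ℤ) ^ (j - 1) *
            (if j = n + 1 then 1 else β j) = ∑ j ∈ Finset.Icc 1 n, 2 ^ (j - 1) * β j := by
          apply Finset.sum_congr rfl
          intro j hj
          simp only [Finset.mem_Icc] at hj
          have : j ≠ n + 1 := by omega
          simp [this]
        rw [this, hsum]
        have hcast : ((m - 2 ^ n : ℕ) : ℤ) = (m : ℤ) - 2 ^ n := by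
          push_cast [Nat.cast_sub (by omega : 2 ^ n ≤ m)]; ring
        rw [hcast]
        simp [pow_succ]; ring

/-- for `r ≥ 1` and `0 ≤ c ≤ 2^(r-1) - 1`, the set
`V = { ∑_{j=1}^{r-1} 2^(j-1) β j + (2^(r-1) + c) β r : β ∈ {−1,1}^r }` equals
`{ ±(c + 2k + 1) : 0 ≤ k < 2^(r-1) }`, and in particular `|V| = 2^r`. -/
theorem stmt_13 (r c : ℕ) (hr : 1 ≤ r) (hc : c ≤ 2 ^ (r - 1) - 1) :
    let V : Set ℤ := { z : ℤ | ∃ β : ℕ → ℤ,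
      (∀ j, 1 ≤ j → j ≤ r → β j = 1 ∨ β j = -1) ∧
      z = (∑ j ∈ Finset.Icc 1 (r - 1), 2 ^ (j - 1) * β j) + (2 ^ (r - 1) + (c : ℤ)) * β r }
    V = { z : ℤ | ∃ k : ℕ, k < 2 ^ (r - 1) ∧
        (z = (c : ℤ) + 2 * k + 1 ∨ z = -((c : ℤ) + 2 * k + 1)) } ∧
    V.ncard = 2 ^ r := by
  intro V
  have hrpos : 1 ≤ 2 ^ (r - 1) := Nat.one_le_two_pow
  have hVeq : V = { z : ℤ | ∃ k : ℕ, k < 2 ^ (r - 1) ∧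
      (z = (c : ℤ) + 2 * k + 1 ∨ z = -((c : ℤ) + 2 * k + 1)) } := by
    ext z
    constructor
    · rintro ⟨β, hβ, rfl⟩
      obtain ⟨m, hm, hsum⟩ := aux_sum_pm (r - 1) β (fun j h1 h2 => hβ j h1 (by omega))
      rw [hsum]
      rcases hβ r hr le_rfl with h | h <;> rw [h]
      · exact ⟨m, hm, Or.inl (by push_cast; ring)⟩
      · refine ⟨2 ^ (r - 1) - 1 - m, by omega, Or.inr ?_⟩
        have : ((2 ^ (r - 1) - 1 - m : ℕ) : ℤ) = 2 ^ (r - 1) - 1 - m := by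
          push_cast [Nat.cast_sub (by omega : m ≤ 2 ^ (r-1) - 1),
            Nat.cast_sub (hrpos : 1 ≤ 2 ^ (r-1))]; ring
        rw [this]; push_cast; ring
    · rintro ⟨k, hk, hz | hz⟩
      · obtain ⟨β, hβ, hsum⟩ := aux_exists_pm (r - 1) k hk
        refine ⟨fun j => if j = r then 1 else β j, ?_, ?_⟩
        · intro j h1 h2
          by_cases hj : j = r
          · simp [hj]
          · simpa [hj] using hβ j h1 (by omega)
        · have heq : ∑ j ∈ Finset.Icc 1 (r - 1), (2:ℤ) ^ (j - 1) *
              (if j = r then 1 else β j) = ∑ j ∈ Finset.Icc 1 (r - 1), 2 ^ (j - 1) * β j := by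
            apply Finset.sum_congr rfl
            intro j hj
            simp only [Finset.mem_Icc] at hj
            have : j ≠ r := by omega
            simp [this]
          rw [heq, hsum, hz]; simp; push_cast; ring
      · obtain ⟨β, hβ, hsum⟩ := aux_exists_pm (r - 1) (2 ^ (r - 1) - 1 - k) (by omega)
        refine ⟨fun j => if j = r then -1 else β j, ?_, ?_⟩
        · intro j h1 h2
          by_cases hj : j = r
          · simp [hj]
          · simpa [hj] using hβ j h1 (by omega)
        · have heq : ∑ j ∈ Finset.Icc 1 (r - 1), (2:ℤ) ^ (j - 1) *
              (if j = r then -1 else β j) = ∑ j ∈ Finset.Icc 1 (r - 1), 2 ^ (j - 1) * β j := by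
            apply Finset.sum_congr rfl
            intro j hj
            simp only [Finset.mem_Icc] at hj
            have : j ≠ r := by omega
            simp [this]
          rw [heq, hsum, hz]
          have : ((2 ^ (r - 1) - 1 - k : ℕ) : ℤ) = 2 ^ (r - 1) - 1 - k := by
            push_cast [Nat.cast_sub (by omega : k ≤ 2 ^ (r-1) - 1),
              Nat.cast_sub (hrpos : 1 ≤ 2 ^ (r-1))]; ring
          rw [this]; simp; push_cast; ring
  refine ⟨hVeq, ?_⟩
  rw [hVeq]
  set F : Finset ℤ := (Finset.range (2 ^ (r - 1))).image (fun k : ℕ => (c : ℤ) + 2 * k + 1) ∪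
    (Finset.range (2 ^ (r - 1))).image (fun k : ℕ => -((c : ℤ) + 2 * k + 1)) with hF
  have hSF : { z : ℤ | ∃ k : ℕ, k < 2 ^ (r - 1) ∧
      (z = (c : ℤ) + 2 * k + 1 ∨ z = -((c : ℤ) + 2 * k + 1)) } = ↑F := by
    ext z
    simp only [hF, Finset.coe_union, Set.mem_union, Finset.coe_image, Set.mem_image,
      Finset.mem_coe, Finset.mem_range, Set.mem_setOf_eq]
    constructor
    · rintro ⟨k, hk, h | h⟩
      · exact Or.inl ⟨k, hk, h.symm⟩
      · exact Or.inr ⟨k, hk, h.symm⟩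
    · rintro (⟨k, hk, h⟩ | ⟨k, hk, h⟩)
      · exact ⟨k, hk, Or.inl h.symm⟩
      · exact ⟨k, hk, Or.inr h.symm⟩
  rw [hSF, Set.ncard_coe_finset]
  have hdisj : Disjoint ((Finset.range (2 ^ (r - 1))).image (fun k : ℕ => (c : ℤ) + 2 * k + 1))
      ((Finset.range (2 ^ (r - 1))).image (fun k : ℕ => -((c : ℤ) + 2 * k + 1))) := by
    rw [Finset.disjoint_left]
    rintro z hz1 hz2
    simp only [Finset.mem_image, Finset.mem_range] at hz1 hz2
    obtain ⟨a, _, ha⟩ := hz1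
    obtain ⟨b, _, hb⟩ := hz2
    omega
  rw [hF, Finset.card_union_of_disjoint hdisj,
    Finset.card_image_of_injective _ (fun a b h => by omega),
    Finset.card_image_of_injective _ (fun a b h => by omega),
    Finset.card_range]
  have h2 : 2 ^ r = 2 ^ (r - 1) * 2 := by
    conv_lhs => rw [← Nat.sub_add_cancel hr]
    rw [pow_succ]
  omega
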